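/- arXiv:1606.08601 — 2 statements merged into one kernel-verified Lean document; each statement's English description precedes it below -/
import Mathlib

section
/- Let k, k' : M × M × (0,∞) → (0,∞) be positive kernels. Suppose there exist 0 < α < β < 1, constants C₁, C₂, C₃, C₄ > 0, and a kernel family k_θ (θ ∈ [0,1]) with k₀ = k, k₁ = k', satisfying the interpolation inequality k_θ ≤ k^{1−θ} (k')^{θ} pointwise for every θ ∈ [0,1], along with C₁ k ≤ k_α ≤ C₂ k and C₃ k' ≤ k_β ≤ C₄ k'. Then there exist constants c, C > 0 with c k ≤ k' ≤ C k pointwise. -/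
lemma interp_aux {C a b θ : ℝ} (hC : 0 < C) (ha : 0 < a) (hb : 0 < b) (hθ : 0 < θ)
    (h : C * a ≤ a ^ (1 - θ) * b ^ θ) : C ^ θ⁻¹ * a ≤ b := by
  have key : a ^ (1 - θ) * b ^ θ = a * (b / a) ^ θ := by
    rw [Real.div_rpow hb.le ha.le, Real.rpow_sub ha, Real.rpow_one]
    field_simp
  rw [key, mul_comm a ((b/a)^θ)] at h
  have h1 : C ≤ (b / a) ^ θ := le_of_mul_le_mul_right h ha
  have h2 : C ^ θ⁻¹ ≤ ((b / a) ^ θ) ^ θ⁻¹ :=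
    Real.rpow_le_rpow hC.le h1 (inv_nonneg.mpr hθ.le)
  rw [Real.rpow_rpow_inv (div_pos hb ha).le hθ.ne'] at h2
  exact (le_div_iff₀ ha).mp h2


/-- Lemma "global-eq": Given an interpolating family `k_θ` with
`k_0 = k`, `k_1 = k'`, `k_θ ≤ k^{1−θ} (k')^{θ}` pointwise for all `θ ∈ [0,1]`, and
two-sided equivalences `C₁ k ≤ k_α ≤ C₂ k` and `C₃ k' ≤ k_β ≤ C₄ k'` for some
`0 < α < β < 1`, the endpoints are equivalent: `c k ≤ k' ≤ C k` for some `c, C > 0`. -/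
theorem endpoints_equivalent_of_interpolation
    {M : Type*} (k k' : M → M → ℝ → ℝ) (kfam : ℝ → M → M → ℝ → ℝ)
    (α β C₁ C₂ C₃ C₄ : ℝ)
    (hα : 0 < α) (hαβ : α < β) (hβ : β < 1)
    (hC₁ : 0 < C₁) (hC₂ : 0 < C₂) (hC₃ : 0 < C₃) (hC₄ : 0 < C₄)
    (hk_pos : ∀ x y t, 0 < t → 0 < k x y t)
    (hk'_pos : ∀ x y t, 0 < t → 0 < k' x y t)
    (hfam_pos : ∀ θ : ℝ, 0 ≤ θ → θ ≤ 1 → ∀ x y t, 0 < t → 0 < kfam θ x y t)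
    (hend0 : kfam 0 = k) (hend1 : kfam 1 = k')
    (hinterp : ∀ θ : ℝ, 0 ≤ θ → θ ≤ 1 → ∀ x y t, 0 < t →
      kfam θ x y t ≤ (k x y t) ^ (1 - θ) * (k' x y t) ^ θ)
    (hαlow : ∀ x y t, 0 < t → C₁ * k x y t ≤ kfam α x y t)
    (hαhigh : ∀ x y t, 0 < t → kfam α x y t ≤ C₂ * k x y t)
    (hβlow : ∀ x y t, 0 < t → C₃ * k' x y t ≤ kfam β x y t)
    (hβhigh : ∀ x y t, 0 < t → kfam β x y t ≤ C₄ * k' x y t) :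
    ∃ c C : ℝ, 0 < c ∧ 0 < C ∧
      ∀ x y t, 0 < t → c * k x y t ≤ k' x y t ∧ k' x y t ≤ C * k x y t := by
  have h1β : 0 < 1 - β := by linarith
  refine ⟨C₁ ^ α⁻¹, (C₃ ^ (1 - β)⁻¹)⁻¹, Real.rpow_pos_of_pos hC₁ _,
    inv_pos.mpr (Real.rpow_pos_of_pos hC₃ _), fun x y t ht => ?_⟩
  have ha := hk_pos x y t ht
  have hb := hk'_pos x y t ht
  constructor
  · have h := (hαlow x y t ht).trans
      (hinterp α hα.le (by linarith) x y t ht)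
    exact interp_aux hC₁ ha hb hα h
  · have h := (hβlow x y t ht).trans
      (hinterp β (by linarith) hβ.le x y t ht)
    have h' : C₃ * k' x y t ≤ (k' x y t) ^ (1 - (1 - β)) * (k x y t) ^ (1 - β) := by
      rw [show (1 : ℝ) - (1 - β) = β by ring,
        mul_comm ((k' x y t) ^ β) ((k x y t) ^ (1 - β))]
      exact h
    have h2 := interp_aux hC₃ hb ha h1β h'
    rw [inv_mul_eq_div, le_div_iff₀ (Real.rpow_pos_of_pos hC₃ _), mul_comm]
    exact h2
end

section
/- Let k be a positive kernel on M × M × (0,∞) and V ≥ 0 a potential. Suppose k' is another positive kernel satisfying the resolvent identity k'(x,y,t) = k(x,y,t) − ∫_0^t ∫_M k(x,z,t−s) V(z) k'(z,y,s) dz ds, and that k ≤ C k' pointwise for some C > 0. Then k satisfies the 3k-inequality with respect to V with constant C: ∫_0^t ∫_M k(x,z,t−s) V(z) k(z,y,s) dz ds ≤ C k(x,y,t) for all x, y ∈ M and t > 0. -/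
open MeasureTheory

/-- If `k'` satisfies the resolvent (Duhamel) identity
`k'(x,y,t) = k(x,y,t) − ∫_0^t ∫_M k(x,z,t−s) V(z) k'(z,y,s) dz ds` with `V ≥ 0`,
and `k ≤ C k'` pointwise, then `k` satisfies the `3k`-inequality with constant `C`. -/
theorem resolvent_identity_implies_3k
    {M : Type*} [MeasurableSpace M] (μ : Measure M)
    (k k' : M → M → ℝ → ℝ) (V : M → ℝ) (C : ℝ) (hC : 0 < C)
    (hk_pos : ∀ x y t, 0 < t → 0 < k x y t)
    (hk'_pos : ∀ x y t, 0 < t → 0 < k' x y t)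
    (hV : ∀ z, 0 ≤ V z)
    (hint : ∀ x y t, 0 < t →
      IntegrableOn (fun s : ℝ => ∫ z, k x z (t - s) * V z * k' z y s ∂μ)
        (Set.Ioo 0 t))
    (hint' : ∀ x y t s, 0 < s → s < t →
      Integrable (fun z => k x z (t - s) * V z * k' z y s) μ)
    (hres : ∀ x y t, 0 < t →
      k' x y t = k x y t -
        ∫ s in Set.Ioo (0 : ℝ) t, ∫ z, k x z (t - s) * V z * k' z y s ∂μ)
    (hcomp : ∀ x y t, 0 < t → k x y t ≤ C * k' x y t) :
    ∀ x y t, 0 < t →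
      (∫ s in Set.Ioo (0 : ℝ) t, ∫ z, k x z (t - s) * V z * k z y s ∂μ)
        ≤ C * k x y t := by
  intro x y t ht
  set f1 : ℝ → ℝ := fun s => ∫ z, k x z (t - s) * V z * k z y s ∂μ with hf1
  set f2 : ℝ → ℝ := fun s => ∫ z, k x z (t - s) * V z * k' z y s ∂μ with hf2
  -- pointwise inner-integral comparison on Ioo 0 t
  have hf2nonneg : ∀ s ∈ Set.Ioo (0 : ℝ) t, 0 ≤ f2 s := by
    intro s hs
    apply integral_nonneg
    intro z
    exact mul_nonneg (mul_nonneg (hk_pos x z (t - s) (by linarith [hs.2])).le (hV z))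
      (hk'_pos z y s hs.1).le
  have hptwise : ∀ s ∈ Set.Ioo (0 : ℝ) t, f1 s ≤ C * f2 s := by
    intro s hs
    have hts : 0 < t - s := by linarith [hs.2]
    have hInt2 := hint' x y t s hs.1 hs.2
    by_cases hInt1 : Integrable (fun z => k x z (t - s) * V z * k z y s) μ
    · have hle : ∀ z, k x z (t - s) * V z * k z y s ≤
          C * (k x z (t - s) * V z * k' z y s) := by
        intro z
        have h1 := (hk_pos x z (t - s) hts).le
        have h2 := hcomp z y s hs.1
        have h3 := hV z
        calc k x z (t - s) * V z * k z y s
            ≤ k x z (t - s) * V z * (C * k' z y s) := by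
              apply mul_le_mul_of_nonneg_left h2 (by positivity)
          _ = C * (k x z (t - s) * V z * k' z y s) := by ring
      have := integral_mono hInt1 (hInt2.const_mul C) hle
      simpa [integral_const_mul] using this
    · rw [hf1]
      simp only
      rw [integral_undef hInt1]
      exact mul_nonneg hC.le (hf2nonneg s hs)
  -- outer comparison
  have houter : (∫ s in Set.Ioo (0 : ℝ) t, f1 s) ≤
      C * ∫ s in Set.Ioo (0 : ℝ) t, f2 s := by
    by_cases hI : IntegrableOn f1 (Set.Ioo 0 t)
    · have h2 : IntegrableOn (fun s => C * f2 s) (Set.Ioo 0 t) :=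
        (hint x y t ht).const_mul C
      have := setIntegral_mono_on hI h2 measurableSet_Ioo hptwise
      simpa [integral_const_mul] using this
    · rw [integral_undef hI]
      exact mul_nonneg hC.le
        (setIntegral_nonneg measurableSet_Ioo hf2nonneg)
  have hres' := hres x y t ht
  have : (∫ s in Set.Ioo (0 : ℝ) t, f2 s) = k x y t - k' x y t := by
    rw [hf2]; linarith [hres']
  rw [this] at houter
  have hk' := hk'_pos x y t ht
  nlinarith [houter]
end
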